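/- (q-analogue of the Srivastava–Pintér addition theorem, Bernoulli in terms of Euler.) For every integer n ≥ 0, every positive integer m, and all x, y ∈ ℂ: B_{n,q}(x,y) = (1/2) Σ_{k=0}^{n} [n choose k]_q m^{k−n} [ B_{k,q}(x) + Σ_{j=0}^{k} [k choose j]_q ((−1;q)_{k−j}/2^{k−j}) B_{j,q}(x) m^{−(k−j)} ] E_{n−k,q}(my), and equivalently B_{n,q}(x,y) = (1/2) Σ_{k=0}^{n} [n choose k]_q m^{k−n} [ B_{k,q}(x) + B_{k,q}(x, 1/m) ] E_{n−k,q}(my). -/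

import Mathlib

open Finset PowerSeries

/-- The `q`-number `[n]_q = (1 - q^n)/(1 - q)`. -/
noncomputable def qNum (q : ℂ) (n : ℕ) : ℂ := (1 - q ^ n) / (1 - q)

/-- The `q`-factorial `[n]_q!`. -/
noncomputable def qFact (q : ℂ) : ℕ → ℂ
  | 0 => 1
  | n + 1 => qNum q (n + 1) * qFact q n

/-- The `q`-shifted factorial `(a; q)_n = ∏_{j=0}^{n-1} (1 - q^j a)`. -/
noncomputable def qShift (a q : ℂ) (n : ℕ) : ℂ := ∏ j ∈ Finset.range n, (1 - q ^ j * a)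

/-- The Gaussian binomial coefficient `[n choose k]_q = (q;q)_n / ((q;q)_{n-k} (q;q)_k)`. -/
noncomputable def qBinom (q : ℂ) (n k : ℕ) : ℂ :=
  qShift q q n / (qShift q q (n - k) * qShift q q k)

/-- The formal power series (in `t`) `𝓔_q(tx) = Σ_{n≥0} (-1;q)_n (x)^n t^n / (2^n [n]_q!)`. -/
noncomputable def qExp (q x : ℂ) : PowerSeries ℂ :=
  PowerSeries.mk fun n => qShift (-1) q n * x ^ n / (2 ^ n * qFact q n)

/-- The generating series `Σ_{n≥0} a_n t^n / [n]_q!` of a sequence `a`. -/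
noncomputable def qGen (q : ℂ) (a : ℕ → ℂ) : PowerSeries ℂ :=
  PowerSeries.mk fun n => a n / qFact q n

/-- The `q`-addition `(x ⊕_q y)^n`. -/
noncomputable def qAdd (q x y : ℂ) (n : ℕ) : ℂ :=
  ∑ k ∈ Finset.range (n + 1),
    qBinom q n k * (qShift (-1) q k * qShift (-1) q (n - k) / 2 ^ n) * x ^ k * y ^ (n - k)

section Aux
variable {q : ℂ} (hq1 : ‖q‖ < 1)

lemma one_sub_q_ne (hq1 : ‖q‖ < 1) : (1 : ℂ) - q ≠ 0 := by
  intro h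
  have : q = 1 := by linear_combination -h
  simp [this] at hq1

lemma qpow_ne_one (hq1 : ‖q‖ < 1) {k : ℕ} (hk : 0 < k) : q ^ k ≠ 1 := by
  intro h
  have : ‖q ^ k‖ = 1 := by rw [h]; simp
  rw [norm_pow] at this
  have h2 : ‖q‖ ^ k < 1 := pow_lt_one₀ (norm_nonneg q) hq1 hk.ne'
  linarith

lemma qNum_ne (hq1 : ‖q‖ < 1) {k : ℕ} (hk : 0 < k) : qNum q k ≠ 0 := by
  unfold qNum
  exact div_ne_zero (by intro h; exact qpow_ne_one hq1 hk (by linear_combination -h)) (one_sub_q_ne hq1)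

lemma qFact_ne (hq1 : ‖q‖ < 1) (n : ℕ) : qFact q n ≠ 0 := by
  induction n with
  | zero => simp [qFact]
  | succ k ih => exact mul_ne_zero (qNum_ne hq1 k.succ_pos) ih

lemma qFact_mul_pow (hq1 : ‖q‖ < 1) (n : ℕ) :
    qFact q n * (1 - q) ^ n = qShift q q n := by
  induction n with
  | zero => simp [qFact, qShift]
  | succ k ih =>
    rw [qShift, Finset.prod_range_succ, ← qShift, qFact]
    have : qNum q (k+1) * (1 - q) = 1 - q ^ (k+1) := by
      rw [qNum, div_mul_cancel₀ _ (one_sub_q_ne hq1)]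
    calc qNum q (k+1) * qFact q k * (1 - q) ^ (k+1)
        = (qFact q k * (1-q)^k) * (qNum q (k+1) * (1-q)) := by ring
      _ = qShift q q k * (1 - q ^ (k+1)) := by rw [ih, this]
      _ = _ := by ring
end Aux

section Aux2
variable {q : ℂ}

lemma qBinom_eq (hq1 : ‖q‖ < 1) {n k : ℕ} (hk : k ≤ n) :
    qBinom q n k = qFact q n / (qFact q k * qFact q (n - k)) := by
  rw [qBinom, ← qFact_mul_pow hq1, ← qFact_mul_pow hq1, ← qFact_mul_pow hq1]
  have h1 : (1 - q) ^ (n - k) * (1 - q) ^ k = (1 - q) ^ n := by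
    rw [← pow_add]; congr 1; omega
  have h2 : ((1:ℂ) - q) ≠ 0 := one_sub_q_ne hq1
  have f1 := qFact_ne hq1 n
  have f2 := qFact_ne hq1 k
  have f3 := qFact_ne hq1 (n - k)
  field_simp
  rw [← h1]

lemma qExp_zero : qExp q 0 = 1 := by
  apply PowerSeries.ext
  intro n
  cases n with
  | zero => simp [qExp, coeff_mk, qShift, qFact, coeff_one]
  | succ k => simp [qExp, coeff_mk, coeff_one]

lemma rescale_qExp (r x : ℂ) : rescale r (qExp q x) = qExp q (r * x) := by
  rw [qExp, rescale_mk, qExp]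
  apply PowerSeries.ext
  intro n
  rw [coeff_mk, coeff_mk, mul_pow]
  ring
  
end Aux2

lemma qExp_sub_one_ne (hq1 : ‖q‖ < 1) : qExp q 1 - 1 ≠ 0 := by
  intro h
  have h1 : (coeff 1) (qExp q 1 - 1) = 0 := by rw [h]; simp
  rw [map_sub, coeff_one] at h1
  simp only [qExp, coeff_mk, if_neg one_ne_zero] at h1
  have e1 : qShift (-1) q 1 = 2 := by simp [qShift]; ring
  have e2 : qFact q 1 = 1 := by
    simp [qFact, qNum, div_self (one_sub_q_ne hq1)]
  rw [e1, e2] at h1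
  norm_num at h1


/-- `q`-analogue of the Srivastava–Pintér addition theorem: the `q`-Bernoulli polynomials in
terms of the `q`-Euler polynomials. -/
theorem qSrivastavaPinter_Bernoulli_Euler (q : ℂ)
    (hq0 : 0 < ‖q‖) (hq1 : ‖q‖ < 1)
    (B E : ℂ → ℂ → ℕ → ℂ)
    (hB : ∀ x y : ℂ, qGen q (B x y) * (qExp q 1 - 1) = PowerSeries.X * qExp q x * qExp q y)
    (hE : ∀ x y : ℂ, qGen q (E x y) * (qExp q 1 + 1) = 2 * qExp q x * qExp q y)
    (n : ℕ) (m : ℕ) (hm : 0 < m) (x y : ℂ) :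
    (B x y n = (1 / 2) * ∑ k ∈ Finset.range (n + 1),
        qBinom q n k * (m : ℂ) ^ ((k : ℤ) - (n : ℤ)) *
          (B x 0 k + ∑ j ∈ Finset.range (k + 1),
            qBinom q k j * (qShift (-1) q (k - j) / 2 ^ (k - j)) * B x 0 j / (m : ℂ) ^ (k - j)) *
          E ((m : ℂ) * y) 0 (n - k)) ∧
    (B x y n = (1 / 2) * ∑ k ∈ Finset.range (n + 1),
        qBinom q n k * (m : ℂ) ^ ((k : ℤ) - (n : ℤ)) *
          (B x 0 k + B x (1 / (m : ℂ)) k) * E ((m : ℂ) * y) 0 (n - k)) := by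
  have hmne : (m : ℂ) ≠ 0 := Nat.cast_ne_zero.mpr hm.ne'
  have hcan := qExp_sub_one_ne hq1
  have h0 : qGen q (B x 0) * (qExp q 1 - 1) = X * qExp q x := by
    have := hB x 0
    rwa [qExp_zero, mul_one] at this
  -- step A
  have key1 : qGen q (B x (1 / (m:ℂ))) = qGen q (B x 0) * qExp q (1 / (m:ℂ)) := by
    apply mul_right_cancel₀ hcan
    rw [hB x (1 / (m:ℂ))]
    linear_combination (- qExp q (1 / (m:ℂ))) * h0
  -- rescaled Euler generating function
  set SE := rescale (1 / (m:ℂ)) (qGen q (E ((m:ℂ) * y) 0)) with hSE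
  have key2 : SE * (qExp q (1 / (m:ℂ)) + 1) = 2 * qExp q y := by
    have h1 := congrArg (rescale (1 / (m:ℂ))) (hE ((m:ℂ) * y) 0)
    rw [map_mul, map_add, map_one, map_mul, map_mul, map_ofNat, rescale_qExp,
      rescale_qExp, rescale_qExp] at h1
    rw [mul_zero, qExp_zero, mul_one, mul_one,
      show (1/(m:ℂ)) * ((m:ℂ)*y) = y from by field_simp] at h1
    exact h1
  -- main generating function identity
  have key3 : 2 * qGen q (B x y) = (qGen q (B x 0) + qGen q (B x (1 / (m:ℂ)))) * SE := by
    apply mul_right_cancel₀ hcan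
    linear_combination 2 * hB x y - SE * h0 - SE * hB x (1 / (m:ℂ))
      - (X * qExp q x) * key2
  have hfn := qFact_ne hq1 n
  -- coefficient form of key3
  have hc : 2 * (B x y n / qFact q n) = ∑ k ∈ Finset.range (n+1),
      ((B x 0 k + B x (1/(m:ℂ)) k) / qFact q k) *
        ((1/(m:ℂ))^(n-k) * (E ((m:ℂ)*y) 0 (n-k) / qFact q (n-k))) := by
    have hkc := congrArg (coeff n) key3
    rw [show (2 : ℂ⟦X⟧) = C (2:ℂ) from (map_ofNat C 2).symm, coeff_C_mul,
      coeff_mul, Finset.Nat.sum_antidiagonal_eq_sum_range_succ_mk] at hkc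
    simp only [map_add, qGen, coeff_mk, hSE, coeff_rescale] at hkc
    rw [hkc]
    apply Finset.sum_congr rfl
    intro k _
    rw [← add_div]
  -- coefficient form of key1
  have inner : ∀ k : ℕ, (∑ j ∈ Finset.range (k + 1),
      qBinom q k j * (qShift (-1) q (k - j) / 2 ^ (k - j)) * B x 0 j / (m : ℂ) ^ (k - j))
      = B x (1/(m:ℂ)) k := by
    intro k
    have hfk := qFact_ne hq1 k
    have hck := congrArg (coeff k) key1
    rw [coeff_mul, Finset.Nat.sum_antidiagonal_eq_sum_range_succ_mk] at hck
    simp only [qGen, qExp, coeff_mk] at hck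
    have : B x (1/(m:ℂ)) k = qFact q k * ∑ j ∈ Finset.range (k+1),
        (B x 0 j / qFact q j) * (qShift (-1) q (k-j) * (1/(m:ℂ))^(k-j) /
          (2^(k-j) * qFact q (k-j))) := by
      rw [← hck]; field_simp
    rw [this, Finset.mul_sum]
    apply Finset.sum_congr rfl
    intro j hj
    have hjk : j ≤ k := Nat.lt_succ_iff.mp (Finset.mem_range.mp hj)
    rw [qBinom_eq hq1 hjk]
    have hfj := qFact_ne hq1 j
    have hfkj := qFact_ne hq1 (k - j)
    field_simp
    rw [mul_assoc, ← mul_pow, mul_one_div_cancel hmne, one_pow, mul_one]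
  -- second conclusion
  have conj2 : B x y n = (1 / 2) * ∑ k ∈ Finset.range (n + 1),
      qBinom q n k * (m : ℂ) ^ ((k : ℤ) - (n : ℤ)) *
        (B x 0 k + B x (1 / (m : ℂ)) k) * E ((m : ℂ) * y) 0 (n - k) := by
    have e : B x y n = qFact q n / 2 * (2 * (B x y n / qFact q n)) := by
      field_simp
    rw [Finset.mul_sum, e, hc, Finset.mul_sum]
    apply Finset.sum_congr rfl
    intro k hk
    have hkn : k ≤ n := Nat.lt_succ_iff.mp (Finset.mem_range.mp hk)
    have hz : (m:ℂ) ^ ((k:ℤ) - (n:ℤ)) = ((m:ℂ)^(n-k))⁻¹ := by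
      rw [show (k:ℤ) - (n:ℤ) = -((n - k : ℕ) : ℤ) from by omega, zpow_neg,
        zpow_natCast]
    rw [qBinom_eq hq1 hkn, hz, one_div, inv_pow]
    have hfk := qFact_ne hq1 k
    have hfnk := qFact_ne hq1 (n - k)
    have hmp : ((m:ℂ))^(n-k) ≠ 0 := pow_ne_zero _ hmne
    field_simp
  refine ⟨?_, conj2⟩
  rw [conj2]
  congr 1
  apply Finset.sum_congr rfl
  intro k _
  rw [inner k]
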